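/- Let (Ω, 𝔽, ℙ) be a probability space, let x⋆ ∈ ℝ^d, let x̂_0 ∈ ℝ^d be deterministic, and let x̂_1, …, x̂_K : Ω → ℝ^d be random vectors with E[‖x̂_k − x⋆‖²] < ∞ for all k, where ‖·‖ is a norm on ℝ^d. Let C₁, C₂ ≥ 0 and suppose that for every 1 ≤ k ≤ K, whenever N_k ≥ C₁ one has E[‖x̂_k − x⋆‖²] ≤ (1/2)·E[‖x̂_{k−1} − x⋆‖²] + C₂/N_k. Let N ≥ 1 and suppose the positive reals N_1, …, N_K satisfy N_k ≥ max{C₁, (3/4)^{K+1−k}·N} for every k. Then E[‖x̂_K − x⋆‖²] ≤ 2^{−K}·‖x̂_0 − x⋆‖² + 4C₂/N. -/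
import Mathlib


open MeasureTheory ProbabilityTheory

noncomputable section


/-- Auxiliary accumulator sequence. -/
def auxf (K : ℕ) : ℕ → ℝ
  | 0 => 0
  | (k+1) => auxf K k / 2 + (4/3) ^ (K - k)

lemma auxf_bound (K : ℕ) : ∀ k, k ≤ K → auxf K k ≤ 4 * (4/3) ^ (K - k) := by
  intro k
  induction k with
  | zero =>
    intro _
    simp [auxf]
    positivity
  | succ k ih =>
    intro hk
    have h1 := ih (by omega)
    have hKk : K - k = (K - (k+1)) + 1 := by omega
    rw [auxf, hKk, pow_succ]
    rw [hKk, pow_succ] at h1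
    nlinarith [pow_nonneg (by norm_num : (0:ℝ) ≤ 4/3) (K - (k+1))]

/-- meta convergence of the variance-reduction outer loop,
Proposition `meta_convergence`. -/
theorem statement4
    {d : ℕ} (hd : 1 ≤ d)
    -- an arbitrary norm `nrm` on ℝ^d
    (nrm : (Fin d → ℝ) → ℝ)
    (hnrm_tri : ∀ x y, nrm (x + y) ≤ nrm x + nrm y)
    (hnrm_smul : ∀ (c : ℝ) x, nrm (c • x) = |c| * nrm x)
    (hnrm_def : ∀ x, nrm x = 0 → x = 0)
    -- the underlying probability space and the random vectors
    {Ω : Type*} [MeasureSpace Ω] [IsProbabilityMeasure (ℙ : Measure Ω)]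
    (K : ℕ) (hK : 1 ≤ K)
    (xstar : Fin d → ℝ) (x0 : Fin d → ℝ)
    (xhat : ℕ → Ω → Fin d → ℝ)
    (hxhat0 : ∀ om, xhat 0 om = x0)
    (hint : ∀ k, k ≤ K → Integrable (fun om => (nrm (xhat k om - xstar)) ^ 2) ℙ)
    (C₁ C₂ : ℝ) (hC₁ : 0 ≤ C₁) (hC₂ : 0 ≤ C₂)
    (Nk : ℕ → ℝ) (hNkpos : ∀ k, 1 ≤ k → k ≤ K → 0 < Nk k)
    -- the contraction hypothesis: for each `1 ≤ k ≤ K`, whenever `N_k ≥ C₁`,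
    -- `E‖x̂_k − x⋆‖² ≤ ½ E‖x̂_{k−1} − x⋆‖² + C₂/N_k`
    (hcontract : ∀ k, 1 ≤ k → k ≤ K → C₁ ≤ Nk k →
      ∫ om : Ω, (nrm (xhat k om - xstar)) ^ 2 ∂(ℙ : Measure Ω)
        ≤ (1 / 2) * ∫ om : Ω, (nrm (xhat (k - 1) om - xstar)) ^ 2 ∂(ℙ : Measure Ω) + C₂ / Nk k)
    (N : ℝ) (hN : 1 ≤ N)
    (hNk : ∀ k, 1 ≤ k → k ≤ K → max C₁ ((3 / 4 : ℝ) ^ (K + 1 - k) * N) ≤ Nk k) :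
    ∫ om : Ω, (nrm (xhat K om - xstar)) ^ 2 ∂(ℙ : Measure Ω)
      ≤ (1 / 2 : ℝ) ^ K * (nrm (x0 - xstar)) ^ 2 + 4 * C₂ / N := by
  have hN0 : (0:ℝ) < N := lt_of_lt_of_le one_pos hN
  have hE0 : ∫ om : Ω, (nrm (xhat 0 om - xstar)) ^ 2 ∂(ℙ : Measure Ω)
      = (nrm (x0 - xstar)) ^ 2 := by
    simp [hxhat0]
  have hmain : ∀ k, k ≤ K →
      ∫ om : Ω, (nrm (xhat k om - xstar)) ^ 2 ∂(ℙ : Measure Ω)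
        ≤ (1/2 : ℝ) ^ k * (nrm (x0 - xstar)) ^ 2 + (C₂ / N) * auxf K k := by
    intro k
    induction k with
    | zero =>
      intro _
      simp [auxf, hE0]
    | succ k ih =>
      intro hk
      have h1 := ih (by omega)
      have hNkk := hNk (k+1) (by omega) hk
      have hNkpos' := hNkpos (k+1) (by omega) hk
      have h2 := hcontract (k+1) (by omega) hk (le_trans (le_max_left _ _) hNkk)
      simp only [Nat.add_sub_cancel] at h2
      have hexp : K + 1 - (k+1) = K - k := by omega
      have hlow : (3/4:ℝ) ^ (K-k) * N ≤ Nk (k+1) := by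
        rw [← hexp]; exact le_trans (le_max_right _ _) hNkk
      have hmul : (3/4:ℝ) ^ (K-k) * (4/3) ^ (K-k) = 1 := by
        rw [← mul_pow]; norm_num
      have h3 : C₂ / Nk (k+1) ≤ C₂ * (4/3) ^ (K-k) / N := by
        rw [div_le_div_iff₀ hNkpos' hN0]
        have hmm := mul_le_mul_of_nonneg_left hlow
          (mul_nonneg hC₂ (pow_nonneg (by norm_num : (0:ℝ) ≤ (4:ℝ)/3) (K-k)))
        have heq : C₂ * (4/3) ^ (K-k) * ((3/4) ^ (K-k) * N) = C₂ * N := by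
          rw [show C₂ * (4/3) ^ (K-k) * ((3/4) ^ (K-k) * N)
              = ((3/4) ^ (K-k) * (4/3) ^ (K-k)) * (C₂ * N) by ring, hmul, one_mul]
        linarith
      calc ∫ om : Ω, (nrm (xhat (k+1) om - xstar)) ^ 2 ∂(ℙ : Measure Ω)
          ≤ (1/2) * ∫ om : Ω, (nrm (xhat k om - xstar)) ^ 2 ∂(ℙ : Measure Ω)
              + C₂ / Nk (k+1) := h2
        _ ≤ (1/2) * ((1/2 : ℝ) ^ k * (nrm (x0 - xstar)) ^ 2 + (C₂ / N) * auxf K k)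
              + C₂ * (4/3) ^ (K-k) / N := by linarith
        _ = (1/2 : ℝ) ^ (k+1) * (nrm (x0 - xstar)) ^ 2 + (C₂ / N) * auxf K (k+1) := by
              rw [auxf]; ring
  have hfK : auxf K K ≤ 4 := by
    have := auxf_bound K K le_rfl
    simpa using this
  have hCN : (0:ℝ) ≤ C₂ / N := div_nonneg hC₂ hN0.le
  have h4 : (C₂ / N) * auxf K K ≤ (C₂ / N) * 4 := mul_le_mul_of_nonneg_left hfK hCN
  have h5 := hmain K le_rfl
  have : (C₂ / N) * 4 = 4 * C₂ / N := by ring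
  linarith


end
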